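/- For the two-qubit operator X = 6|ψ⁺⟩⟨ψ⁺| − |00⟩⟨00| − 2|11⟩⟨11| with |ψ⁺⟩ = (|01⟩+|10⟩)/√2, the maximum of |⟨φ|X|φ⟩| over product states |φ⟩=|a⟩|b⟩ equals 3 (attained at |01⟩), while the maximum over symmetric product states |a⟩|a⟩ equals 34/15 < 3. -/

import Mathlib

/-- ⟨a⊗b| X |a⊗b⟩ for X = 6|ψ⁺⟩⟨ψ⁺| − |00⟩⟨00| − 2|11⟩⟨11| with
|ψ⁺⟩ = (|01⟩+|10⟩)/√2, evaluated on the product state a⊗b. -/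
noncomputable def expX (a b : Fin 2 → ℂ) : ℝ :=
  6 * ‖(a 0 * b 1 + a 1 * b 0) / (Real.sqrt 2 : ℂ)‖ ^ 2
    - ‖a 0 * b 0‖ ^ 2 - 2 * ‖a 1 * b 1‖ ^ 2

lemma expX_eq (a b : Fin 2 → ℂ) :
    expX a b = 3 * ‖a 0 * b 1 + a 1 * b 0‖ ^ 2
      - ‖a 0 * b 0‖ ^ 2 - 2 * ‖a 1 * b 1‖ ^ 2 := by
  unfold expX
  rw [norm_div, Complex.norm_real, Real.norm_of_nonneg (Real.sqrt_nonneg 2),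
    div_pow, Real.sq_sqrt (by norm_num : (0:ℝ) ≤ 2)]
  ring

lemma expX_real (x y u v : ℝ) (hx : 0 ≤ x) (hy : 0 ≤ y) (hu : 0 ≤ u) (hv : 0 ≤ v) :
    expX ![(x:ℂ), (y:ℂ)] ![(u:ℂ), (v:ℂ)]
      = 3 * (x*v + y*u)^2 - (x*u)^2 - 2*(y*v)^2 := by
  rw [expX_eq]
  simp only [Matrix.cons_val_zero, Matrix.cons_val_one, Matrix.head_cons]
  have h1 : (x:ℂ) * v + (y:ℂ) * u = ((x*v + y*u : ℝ) : ℂ) := by push_cast; ring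
  have h2 : (x:ℂ) * u = ((x*u : ℝ) : ℂ) := by push_cast; ring
  have h3 : (y:ℂ) * v = ((y*v : ℝ) : ℂ) := by push_cast; ring
  rw [h1, h2, h3, Complex.norm_real, Complex.norm_real, Complex.norm_real,
    Real.norm_eq_abs, Real.norm_eq_abs, Real.norm_eq_abs,
    abs_of_nonneg (by positivity), abs_of_nonneg (by positivity),
    abs_of_nonneg (by positivity)]

lemma abs_expX_le (a b : Fin 2 → ℂ)
    (ha : ∑ i, ‖a i‖ ^ 2 = 1) (hb : ∑ i, ‖b i‖ ^ 2 = 1) :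
    |expX a b| ≤ 3 := by
  rw [Fin.sum_univ_two] at ha hb
  set p := ‖a 0‖ with hp'
  set q := ‖a 1‖ with hq'
  set r := ‖b 0‖ with hr'
  set s := ‖b 1‖ with hs'
  have hp : 0 ≤ p := norm_nonneg _
  have hq : 0 ≤ q := norm_nonneg _
  have hr : 0 ≤ r := norm_nonneg _
  have hs : 0 ≤ s := norm_nonneg _
  set z := ‖a 0 * b 1 + a 1 * b 0‖ with hz'
  have hz0 : 0 ≤ z := norm_nonneg _
  have htri : z ≤ p * s + q * r := by
    calc z ≤ ‖a 0 * b 1‖ + ‖a 1 * b 0‖ :=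
          norm_add_le _ _
      _ = p * s + q * r := by rw [norm_mul, norm_mul]
  have hz2 : z ^ 2 ≤ (p * s + q * r) ^ 2 := by
    apply pow_le_pow_left₀ hz0 htri
  rw [expX_eq, abs_le]
  have h00 : ‖a 0 * b 0‖ = p * r := by rw [norm_mul]
  have h11 : ‖a 1 * b 1‖ = q * s := by rw [norm_mul]
  rw [h00, h11]
  constructor
  · nlinarith [sq_nonneg z, sq_nonneg (p*r), sq_nonneg (q*s), sq_nonneg (p*s - q*r),
      mul_nonneg hp hq, mul_nonneg hr hs, sq_nonneg (p*q), sq_nonneg (r*s),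
      mul_nonneg (mul_nonneg hp hq) (mul_nonneg hr hs)]
  · nlinarith [sq_nonneg (p*s - q*r), sq_nonneg (p*r - q*s),
      mul_nonneg (mul_nonneg hp hq) (mul_nonneg hr hs), sq_nonneg z]

lemma abs_expX_sym_le (a : Fin 2 → ℂ)
    (ha : ∑ i, ‖a i‖ ^ 2 = 1) :
    |expX a a| ≤ 34 / 15 := by
  rw [Fin.sum_univ_two] at ha
  have hsum : a 0 * a 1 + a 1 * a 0 = 2 * (a 0 * a 1) := by ring
  rw [expX_eq, hsum]
  simp only [norm_mul, Complex.norm_two]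
  set p := ‖a 0‖ with hp'
  set q := ‖a 1‖ with hq'
  have hp : 0 ≤ p := norm_nonneg _
  have hq : 0 ≤ q := norm_nonneg _
  rw [abs_le]
  have hp2 : p ^ 2 ≤ 1 := by nlinarith [sq_nonneg q]
  constructor
  · nlinarith [sq_nonneg p, sq_nonneg q, sq_nonneg (p*q)]
  · nlinarith [sq_nonneg (15 * p^2 - 8)]

/-- For X = 6|ψ⁺⟩⟨ψ⁺| − |00⟩⟨00| − 2|11⟩⟨11|, the maximum of |⟨φ|X|φ⟩| over
product states is 3, attained at |01⟩, while the maximum over symmetric product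
states is 34/15 < 3. -/
theorem stmt_18 :
    IsGreatest {x : ℝ | ∃ a b : Fin 2 → ℂ,
        (∑ i, ‖a i‖ ^ 2 = 1) ∧ (∑ i, ‖b i‖ ^ 2 = 1) ∧
        x = |expX a b|} 3 ∧
    |expX ![1, 0] ![0, 1]| = 3 ∧
    IsGreatest {x : ℝ | ∃ a : Fin 2 → ℂ,
        (∑ i, ‖a i‖ ^ 2 = 1) ∧ x = |expX a a|} (34 / 15) ∧
    (34 / 15 : ℝ) < 3 := by
  have hval : expX ![1, 0] ![0, 1] = 3 := by
    have := expX_real 1 0 0 1 zero_le_one le_rfl le_rfl zero_le_one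
    norm_num at this ⊢
    convert this using 2 <;> norm_num
  have habs : |expX ![1, 0] ![0, 1]| = 3 := by rw [hval]; norm_num
  refine ⟨⟨⟨![1, 0], ![0, 1], ?_, ?_, habs.symm⟩, ?_⟩, habs, ⟨⟨?_, ?_⟩, by norm_num⟩⟩
  · simp [Fin.sum_univ_two]
  · simp [Fin.sum_univ_two]
  · rintro x ⟨a, b, ha, hb, rfl⟩
    exact abs_expX_le a b ha hb
  · -- membership for symmetric case
    refine ⟨![(Real.sqrt (8/15) : ℂ), (Real.sqrt (7/15) : ℂ)], ?_, ?_⟩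
    · simp only [Fin.sum_univ_two, Matrix.cons_val_zero, Matrix.cons_val_one,
        Matrix.head_cons, Complex.norm_real, Real.norm_eq_abs,
        abs_of_nonneg (Real.sqrt_nonneg _)]
      rw [Real.sq_sqrt (by norm_num : (0:ℝ) ≤ 8/15),
        Real.sq_sqrt (by norm_num : (0:ℝ) ≤ 7/15)]
      norm_num
    · have h := expX_real (Real.sqrt (8/15)) (Real.sqrt (7/15))
        (Real.sqrt (8/15)) (Real.sqrt (7/15))
        (Real.sqrt_nonneg _) (Real.sqrt_nonneg _)
        (Real.sqrt_nonneg _) (Real.sqrt_nonneg _)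
      have h8 : Real.sqrt (8/15) ^ 2 = 8/15 := Real.sq_sqrt (by norm_num)
      have h7 : Real.sqrt (7/15) ^ 2 = 7/15 := Real.sq_sqrt (by norm_num)
      rw [h]
      rw [abs_of_nonneg (by nlinarith)]
      nlinarith
  · rintro x ⟨a, ha, rfl⟩
    exact abs_expX_sym_le a ha
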